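/- For each fixed β ≥ 0 there exist constants C > 0, M > 0 and δ₀ > 0 such that for all α, δ > 0 with δ·α ≥ M and δ ≤ δ₀: if k > 0 satisfies k·(k·sinh(δk) − β·cosh(δk)) = α·(k·cosh(δk) − β·sinh(δk)) and ψ(t) = C₀·((1+β/k)e^{k(t−δ)} + (1−β/k)e^{−k(t−δ)}) with C₀ > 0 chosen so that ∫₀^δ ψ(t)² dt = 1, then |∫₀^δ ψ'(t)² dt − α²| ≤ C·α²·e^{−δα}. -/

import Mathlib

set_option maxHeartbeats 1000000

lemma sinh_le_mul_cosh {x : ℝ} (hx : 0 ≤ x) : Real.sinh x ≤ x * Real.cosh x := by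
  have key : ∀ y : ℝ, HasDerivAt (fun y => y * Real.cosh y - Real.sinh y) (y * Real.sinh y) y := by
    intro y
    have h1 : HasDerivAt (fun y : ℝ => y * Real.cosh y) (1 * Real.cosh y + y * Real.sinh y) y :=
      (hasDerivAt_id y).mul (Real.hasDerivAt_cosh y)
    have h2 := h1.sub (Real.hasDerivAt_sinh y)
    convert (show HasDerivAt (fun y => y * Real.cosh y - Real.sinh y) _ y from h2) using 1
    ring
  have mono : MonotoneOn (fun y => y * Real.cosh y - Real.sinh y) (Set.Icc 0 x) := by
    apply monotoneOn_of_deriv_nonneg (convex_Icc 0 x)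
    · exact Continuous.continuousOn (by continuity)
    · intro y _
      exact ((key y).differentiableAt).differentiableWithinAt
    · intro y hy
      rw [(key y).deriv]
      rw [interior_Icc] at hy
      exact mul_nonneg hy.1.le (Real.sinh_nonneg_iff.2 hy.1.le)
  have h0 := mono (Set.left_mem_Icc.2 hx) (Set.right_mem_Icc.2 hx) hx
  simp only [Real.cosh_zero, Real.sinh_zero, zero_mul, sub_zero, mul_zero] at h0
  linarith

lemma key_integral (k δ A B : ℝ) (hk : 0 < k) :
    (∫ t in (0:ℝ)..δ, (A * Real.exp (k*(t-δ)) + B * Real.exp (-(k*(t-δ))))^2)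
    = A^2 * (1 - Real.exp (-(2*(δ*k))))/(2*k) + B^2 * (Real.exp (2*(δ*k)) - 1)/(2*k)
      + 2*A*B*δ := by
  have hF : ∀ t : ℝ, HasDerivAt
      (fun t => A^2/(2*k)*Real.exp (2*k*(t-δ)) - B^2/(2*k)*Real.exp (-(2*k*(t-δ))) + 2*A*B*t)
      ((A * Real.exp (k*(t-δ)) + B * Real.exp (-(k*(t-δ))))^2) t := by
    intro t
    have h1 : HasDerivAt (fun t : ℝ => 2*k*(t-δ)) (2*k) t := by
      simpa using ((hasDerivAt_id t).sub_const δ).const_mul (2*k)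
    have h2 := (h1.exp.const_mul (A^2/(2*k))).sub (h1.neg.exp.const_mul (B^2/(2*k)))
    have h3 := h2.add ((hasDerivAt_id t).const_mul (2*A*B))
    convert (show HasDerivAt
        (fun t => A^2/(2*k)*Real.exp (2*k*(t-δ)) - B^2/(2*k)*Real.exp (-(2*k*(t-δ))) + 2*A*B*t)
        _ t from h3) using 1
    have e11 : Real.exp (k*(t-δ)) * Real.exp (k*(t-δ)) = Real.exp (2*k*(t-δ)) := by
      rw [← Real.exp_add]; ring_nf
    have e22 : Real.exp (-(k*(t-δ))) * Real.exp (-(k*(t-δ))) = Real.exp (-(2*k*(t-δ))) := by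
      rw [← Real.exp_add]; ring_nf
    have e12 : Real.exp (k*(t-δ)) * Real.exp (-(k*(t-δ))) = 1 := by
      rw [← Real.exp_add]; simp
    simp only [Pi.neg_apply]
    field_simp
    linear_combination (norm := ring_nf) A^2 * e11 + B^2 * e22 + (2*A*B) * e12
  have hint : IntervalIntegrable
      (fun t => (A * Real.exp (k*(t-δ)) + B * Real.exp (-(k*(t-δ))))^2) MeasureTheory.volume 0 δ := by
    apply Continuous.intervalIntegrable
    continuity
  rw [intervalIntegral.integral_eq_sub_of_hasDerivAt (fun t _ => hF t) hint]
  have ha : 2*k*(δ-δ) = 0 := by ring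
  have hb : 2*k*((0:ℝ)-δ) = -(2*(δ*k)) := by ring
  rw [ha, hb]
  simp only [Real.exp_zero, neg_neg]
  field_simp
  rw [neg_zero, Real.exp_zero]
  ring

theorem robin_robin_eigenfunction_derivative_norm (β : ℝ) (hβ : 0 ≤ β) :
    ∃ C > (0:ℝ), ∃ M > (0:ℝ), ∃ δ₀ > (0:ℝ), ∀ α δ : ℝ, 0 < α → 0 < δ →
      M ≤ δ * α → δ ≤ δ₀ →
      ∀ k C₀ : ℝ, 0 < k →
        k * (k * Real.sinh (δ * k) - β * Real.cosh (δ * k)) =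
          α * (k * Real.cosh (δ * k) - β * Real.sinh (δ * k)) →
        0 < C₀ →
        ∀ ψ : ℝ → ℝ,
          ψ = (fun t => C₀ * ((1 + β / k) * Real.exp (k * (t - δ)) +
            (1 - β / k) * Real.exp (-(k * (t - δ))))) →
          (∫ t in (0:ℝ)..δ, ψ t ^ 2) = 1 →
          |(∫ t in (0:ℝ)..δ, deriv ψ t ^ 2) - α ^ 2| ≤
            C * α ^ 2 * Real.exp (-(δ * α)) := by
  refine ⟨300, by norm_num, 2*β+2, by linarith, 1/(2*β+1), by positivity, ?_⟩
  intro α δ hα hδ hM hδ0 k C₀ hk hsec hC₀ ψ hψ hnorm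
  subst hψ
  set P := Real.exp (δ*k) with hPdef
  set R := Real.exp (-(δ*k)) with hRdef
  set S := Real.exp (-(δ*α)) with hSdef
  clear_value P R S
  have hPpos : 0 < P := hPdef ▸ Real.exp_pos _
  have hRpos : 0 < R := hRdef ▸ Real.exp_pos _
  have hSpos : 0 < S := hSdef ▸ Real.exp_pos _
  have hPR : P * R = 1 := by rw [hPdef, hRdef, ← Real.exp_add]; simp
  have hβδ : β * δ < 1 := by
    have h1 : β * δ ≤ β * (1/(2*β+1)) := mul_le_mul_of_nonneg_left hδ0 hβ
    have h2 : β * (1/(2*β+1)) < 1 := by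
      rw [mul_one_div, div_lt_one (by linarith)]; linarith
    linarith
  have hδ1 : δ ≤ 1 := by
    refine hδ0.trans ?_
    rw [div_le_one (by linarith)]; linarith
  have hαM : 2*β+2 ≤ α := by
    have := mul_le_mul_of_nonneg_right hδ1 hα.le
    rw [one_mul] at this
    linarith
  have hsinh : Real.sinh (δ*k) = (P - R)/2 := by rw [Real.sinh_eq, hPdef, hRdef]
  have hcosh : Real.cosh (δ*k) = (P + R)/2 := by rw [Real.cosh_eq, hPdef, hRdef]
  rw [hsinh, hcosh] at hsec
  have htanh : (P - R)/2 ≤ (δ*k)*((P+R)/2) := by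
    have h := sinh_le_mul_cosh (mul_pos hδ hk).le
    rw [hsinh, hcosh] at h; exact h
  -- positivity of k cosh - β sinh
  have hD : 0 < k*((P+R)/2) - β*((P-R)/2) := by
    by_contra h
    push_neg at h
    have h1 : β*((P-R)/2) ≤ β*((δ*k)*((P+R)/2)) := mul_le_mul_of_nonneg_left htanh hβ
    have h2 : 0 < k*((P+R)/2) := by positivity
    have h3 := mul_lt_mul_of_pos_right hβδ h2
    rw [one_mul] at h3
    linarith [h, h1, h3]
  -- positivity of k sinh - β cosh
  have hN : 0 < k*((P-R)/2) - β*((P+R)/2) := by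
    by_contra h
    push_neg at h
    have h1 := mul_nonpos_of_nonneg_of_nonpos hk.le h
    linarith [mul_pos hα hD, h1, hsec]
  -- the key identity for k - α
  have hkα : (k - α) * (k*((P-R)/2) - β*((P+R)/2)) = α*(k+β)*R := by
    linear_combination hsec
  have hkgtα : α < k := by
    by_contra h
    push_neg at h
    have h1 : (k - α) * (k*((P-R)/2) - β*((P+R)/2)) ≤ 0 :=
      mul_nonpos_of_nonpos_of_nonneg (by linarith) hN.le
    rw [hkα] at h1
    have hpos : 0 < α*(k+β)*R := mul_pos (mul_pos hα (by linarith)) hRpos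
    linarith
  have hxa : δ*α ≤ δ*k := mul_le_mul_of_nonneg_left hkgtα.le hδ.le
  have ha2 : 2 ≤ δ*α := by linarith
  have hβk : 2*β ≤ k := by linarith
  have hPge : δ*k + 1 ≤ P := hPdef ▸ Real.add_one_le_exp _
  have hP3 : 3 ≤ P := by linarith
  have hR3 : R ≤ 1/3 := by
    have := mul_le_mul_of_nonneg_right hP3 hRpos.le
    rw [hPR] at this
    linarith
  have hRS : R ≤ S := by
    rw [hRdef, hSdef]
    exact Real.exp_le_exp.2 (by linarith)
  have hS1 : S ≤ 1 := by
    rw [hSdef]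
    exact Real.exp_le_one_iff.2 (neg_nonpos.2 (mul_nonneg hδ.le hα.le))
  have hxR : (δ*k) * R ≤ 1 := by
    have := mul_le_mul_of_nonneg_right (show δ*k ≤ P by linarith) hRpos.le
    rw [hPR] at this
    linarith
  -- lower bound on the denominator
  have hNlb : k*P/6 ≤ k*((P-R)/2) - β*((P+R)/2) := by
    have w1 := mul_le_mul_of_nonneg_right hβk (show (0:ℝ) ≤ (P+R)/2 by positivity)
    have w2 := mul_le_mul_of_nonneg_left hR3 hk.le
    have w3 := mul_le_mul_of_nonneg_left hP3 hk.le
    linarith [w1, w2, w3]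
  -- k - α ≤ 9 α R²
  have hkα2 : k - α ≤ 9*α*R^2 := by
    have h1 : (k-α)*(k*P/6) ≤ α*((3/2)*k)*R := by
      have h2 : (k-α)*(k*P/6) ≤ (k-α)*(k*((P-R)/2) - β*((P+R)/2)) :=
        mul_le_mul_of_nonneg_left hNlb (by linarith)
      rw [hkα] at h2
      have h3 := mul_le_mul_of_nonneg_right (show k+β ≤ (3/2)*k by linarith)
        (mul_pos hα hRpos).le
      linarith [h3]
    have h4 : (k-α)*(k*P)*R ≤ 9*α*k*R*R := by
      linarith [mul_le_mul_of_nonneg_right h1 hRpos.le]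
    have h5 : (k-α)*(k*P)*R = (k-α)*k := by
      have e : (k-α)*(k*P)*R = (k-α)*k*(P*R) := by ring
      rw [e, hPR, mul_one]
    have h6 : (k-α)*k ≤ (9*α*R^2)*k := by linarith [h4, h5]
    exact le_of_mul_le_mul_right h6 hk
  have hR2le : R^2 ≤ 1/9 := by
    have := mul_le_mul hR3 hR3 hRpos.le (by norm_num)
    linarith [this]
  have hkle : k ≤ 2*α := by
    have := mul_le_mul_of_nonneg_left hR2le hα.le
    linarith [hkα2, this]
  have hsum : (k - α) * (k + α) ≤ 9*α*R^2 * (3*α) :=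
    mul_le_mul hkα2 (by linarith) (by linarith) (by positivity)
  have hsq : k^2 - α^2 ≤ 27*α^2*(R*R) := by linarith [hsum]
  -- set up the integrals
  set A := C₀*(1+β/k) with hAdef
  set B := C₀*(1-β/k) with hBdef
  clear_value A B
  have hβk' : β/k ≤ 1/2 := by rw [div_le_iff₀ hk]; linarith
  have hβk0 : 0 ≤ β/k := by positivity
  have hApos : 0 < A := by rw [hAdef]; exact mul_pos hC₀ (by linarith)
  have hBpos : 0 < B := by rw [hBdef]; exact mul_pos hC₀ (by linarith)
  have hBC : C₀/2 ≤ B := by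
    rw [hBdef]
    have := mul_le_mul_of_nonneg_left (show 1/2 ≤ 1-β/k by linarith) hC₀.le
    linarith
  have hBub : B ≤ C₀ := by
    rw [hBdef]
    have := mul_le_mul_of_nonneg_left (show 1-β/k ≤ 1 by linarith) hC₀.le
    linarith
  have hA32 : A ≤ (3/2)*C₀ := by
    rw [hAdef]
    have := mul_le_mul_of_nonneg_left (show 1+β/k ≤ 3/2 by linarith) hC₀.le
    linarith
  have hP2 : Real.exp (2*(δ*k)) = P*P := by rw [hPdef, ← Real.exp_add]; ring_nf
  have hR2 : Real.exp (-(2*(δ*k))) = R*R := by rw [hRdef, ← Real.exp_add]; ring_nf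
  -- rewrite the normalization integral
  have hnorm' : A^2 * (1 - R*R)/(2*k) + B^2 * (P*P - 1)/(2*k) + 2*A*B*δ = 1 := by
    rw [← hR2, ← hP2, ← key_integral k δ A B hk, ← hnorm]
    apply intervalIntegral.integral_congr
    intro t _
    simp only [hAdef, hBdef]
    ring
  -- compute the derivative of ψ
  have hder : ∀ t, deriv (fun t => C₀ * ((1 + β / k) * Real.exp (k * (t - δ)) +
      (1 - β / k) * Real.exp (-(k * (t - δ))))) t
      = (k*A) * Real.exp (k*(t-δ)) + (-(k*B)) * Real.exp (-(k*(t-δ))) := by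
    intro t
    have h1 : HasDerivAt (fun t : ℝ => k*(t-δ)) k t := by
      simpa using ((hasDerivAt_id t).sub_const δ).const_mul k
    have h2 := ((h1.exp.const_mul (1+β/k)).add (h1.neg.exp.const_mul (1-β/k))).const_mul C₀
    rw [(show HasDerivAt (fun t => C₀ * ((1 + β / k) * Real.exp (k * (t - δ)) +
        (1 - β / k) * Real.exp (-(k * (t - δ))))) _ t from h2).deriv]
    simp only [hAdef, hBdef, Pi.neg_apply]
    ring
  -- compute the derivative integral
  have hDint : (∫ t in (0:ℝ)..δ, deriv (fun t => C₀ * ((1 + β / k) * Real.exp (k * (t - δ)) +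
      (1 - β / k) * Real.exp (-(k * (t - δ))))) t ^ 2)
      = k^2 - 4*(k^2*(A*B))*δ := by
    have step1 : (∫ t in (0:ℝ)..δ, deriv (fun t => C₀ * ((1 + β / k) * Real.exp (k * (t - δ)) +
        (1 - β / k) * Real.exp (-(k * (t - δ))))) t ^ 2)
        = ∫ t in (0:ℝ)..δ, ((k*A) * Real.exp (k*(t-δ)) + (-(k*B)) * Real.exp (-(k*(t-δ))))^2 := by
      apply intervalIntegral.integral_congr
      intro t _
      show (deriv (fun t => C₀ * ((1 + β / k) * Real.exp (k * (t - δ)) +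
        (1 - β / k) * Real.exp (-(k * (t - δ))))) t) ^ 2
        = ((k*A) * Real.exp (k*(t-δ)) + (-(k*B)) * Real.exp (-(k*(t-δ))))^2
      rw [hder t]
    rw [step1, key_integral k δ (k*A) (-(k*B)) hk, hP2, hR2]
    have expand : (k*A)^2 * (1 - R*R)/(2*k) + (-(k*B))^2 * (P*P - 1)/(2*k) + 2*(k*A)*(-(k*B))*δ
        = k^2 * (A^2 * (1 - R*R)/(2*k) + B^2 * (P*P - 1)/(2*k) + 2*A*B*δ) - 4*(k^2*(A*B))*δ := by
      field_simp
      ring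
    rw [expand, hnorm']
    ring
  rw [hDint]
  clear hder hnorm hDint hsec
  -- bound C₀² via the normalization
  have h9 : (9:ℝ) ≤ P*P := by
    have := mul_le_mul hP3 hP3 (by norm_num) (by linarith)
    linarith
  have hPP1 : (0:ℝ) ≤ P*P - 1 := by linarith
  have hC₀2 : C₀^2*(P*P) ≤ 9*k := by
    have t1 : 0 ≤ A^2 * (1 - R*R)/(2*k) := by
      apply div_nonneg _ (by linarith)
      exact mul_nonneg (sq_nonneg A) (by linarith [hR2le])
    have t3 : 0 ≤ 2*A*B*δ := by positivity
    have t2 : B^2 * (P*P - 1) ≤ 2*k := by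
      have h5 : B^2 * (P*P - 1)/(2*k) ≤ 1 := by linarith
      rw [div_le_one (by linarith)] at h5
      linarith
    have hB2 : C₀^2/4 ≤ B^2 := by
      have := mul_le_mul hBC hBC (by linarith) hBpos.le
      linarith [this]
    have b1 := mul_le_mul_of_nonneg_right hB2 hPP1
    have b2 := mul_le_mul_of_nonneg_left h9 (sq_nonneg C₀)
    linarith [b1, b2, t2]
  have hABub : A*B ≤ (3/2)*C₀^2 := by
    linarith [mul_le_mul hA32 hBub hBpos.le (by positivity : (0:ℝ) ≤ (3/2)*C₀)]
  have hABpos : 0 ≤ A*B := le_of_lt (mul_pos hApos hBpos)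
  -- final bound on the subtracted term
  have hfin : 4*(k^2*(A*B))*δ ≤ 216*α^2*S := by
    have u1 : 4*(k^2*(A*B))*δ ≤ 6*(k^2*C₀^2)*δ := by
      linarith [mul_le_mul_of_nonneg_left hABub (show (0:ℝ) ≤ 4*k^2*δ by positivity)]
    have ePR : C₀^2*(P*P)*(R*R) = C₀^2 := by
      have e : C₀^2*(P*P)*(R*R) = C₀^2*((P*R)*(P*R)) := by ring
      rw [e, hPR]; ring
    have u2 : C₀^2 ≤ 9*k*(R*R) := by
      have w := mul_le_mul_of_nonneg_right hC₀2 (mul_nonneg hRpos.le hRpos.le)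
      rw [ePR] at w
      exact w
    have u3 : 6*(k^2*C₀^2)*δ ≤ 54*(k^2)*((δ*k)*R)*R := by
      linarith [mul_le_mul_of_nonneg_left u2 (show (0:ℝ) ≤ 6*k^2*δ by positivity)]
    have k2 : k^2 ≤ 4*α^2 := by
      have := mul_le_mul hkle hkle hk.le (by linarith)
      linarith [this]
    have v1 : k^2*((δ*k)*R) ≤ 4*α^2 := by
      have := mul_le_mul k2 hxR (by positivity) (by positivity : (0:ℝ) ≤ 4*α^2)
      linarith [this]
    have u4 : 54*(k^2)*((δ*k)*R)*R ≤ 54*(4*α^2)*R := by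
      linarith [mul_le_mul_of_nonneg_right v1 hRpos.le]
    have u5 : 54*(4*α^2)*R ≤ 216*α^2*S := by
      linarith [mul_le_mul_of_nonneg_left hRS (show (0:ℝ) ≤ 216*α^2 by positivity)]
    linarith
  have hRRS : R*R ≤ S := by
    have h1 := mul_le_mul_of_nonneg_left (show R ≤ 1 by linarith) hRpos.le
    rw [mul_one] at h1
    linarith
  have hαS : 0 ≤ α^2*S := by positivity
  have hk2ge : α^2 ≤ k^2 := by
    have := mul_le_mul hkgtα.le hkgtα.le hα.le (by linarith)
    linarith [this]
  have h4AB : 0 ≤ 4*(k^2*(A*B))*δ := by positivity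
  rw [abs_le]
  constructor
  · linarith [hfin, hk2ge, hαS]
  · have h27 := mul_le_mul_of_nonneg_left hRRS (show (0:ℝ) ≤ 27*α^2 by positivity)
    linarith [hsq, h27, h4AB, hαS]
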